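/- Let G be an n-vertex bipartite graph, k a positive integer, S* a fixed vertex cover of G, H the perturbation of G with respect to S*, and μ = 2nk + 2n − 1. For all vertex covers S and T of G of size at most k: if dist_{R_k(G)}(S, T) is finite, then dist_{R_μ(H)}(f(S), f(T)) is finite and dist_{R_k(G)}(S, T) ≤ dist_{R_μ(H)}(f(S), f(T)) ≤ (2n + 1) · dist_{R_k(G)}(S, T). -/

import Mathlib

/-- A set of vertices is a vertex cover of `G` if it contains at least one
endpoint of every edge. -/
def IsVC {α : Type*} (G : SimpleGraph α) (S : Finset α) : Prop :=
  ∀ ⦃u v : α⦄, G.Adj u v → u ∈ S ∨ v ∈ S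

/-- Vertex type of the perturbation `H` of an `n`-vertex graph `G` with respect
to `S*`: each vertex `v ∈ S*` gets `2n` twin copies and each `v ∉ S*` gets
`2n + 1` twin copies. -/
abbrev PV (V : Type) [DecidableEq V] (n : ℕ) (Sstar : Finset V) : Type :=
  {p : V × Fin (2 * n + 1) // p.1 ∈ Sstar → (p.2 : ℕ) < 2 * n}

/-- The perturbation `H` of `G` with respect to `S*`: a copy of `u` and a copy
of `v` are adjacent iff `uv` is an edge of `G` (in particular copies of the
same vertex are non-adjacent). -/
def perturb {V : Type} [DecidableEq V] (G : SimpleGraph V) (n : ℕ) (Sstar : Finset V) :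
    SimpleGraph (PV V n Sstar) where
  Adj p q := G.Adj p.1.1 q.1.1
  symm := ⟨fun _ _ h => G.symm.symm _ _ h⟩
  loopless := ⟨fun _ h => G.loopless.irrefl _ h⟩

/-- `f(v)`: the set of copies of `v` in the perturbation. -/
def fcopy {V : Type} [DecidableEq V] [Fintype V] (n : ℕ) (Sstar : Finset V) (v : V) :
    Finset (PV V n Sstar) :=
  Finset.univ.filter (fun p => p.1.1 = v)

/-- `f(X) = ⋃_{v ∈ X} f(v)`. -/
def fset {V : Type} [DecidableEq V] [Fintype V] (n : ℕ) (Sstar : Finset V) (X : Finset V) :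
    Finset (PV V n Sstar) :=
  Finset.univ.filter (fun p => p.1.1 ∈ X)

/-- `f⁻¹(X̂) = {v : f(v) ⊆ X̂}`. -/
def finv {V : Type} [DecidableEq V] [Fintype V] (n : ℕ) (Sstar : Finset V)
    (Xh : Finset (PV V n Sstar)) : Finset V :=
  Finset.univ.filter (fun v => fcopy n Sstar v ⊆ Xh)

/-- A reconfiguration sequence in `R_k(G)` from `S` to `T`. -/
def ReconfSeq {α : Type*} [DecidableEq α] (G : SimpleGraph α) (k : ℕ) (S T : Finset α)
    (t : ℕ) (Q : ℕ → Finset α) : Prop :=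
  Q 0 = S ∧ Q t = T ∧ (∀ i ≤ t, IsVC G (Q i) ∧ (Q i).card ≤ k) ∧
    ∀ i < t, (symmDiff (Q i) (Q (i + 1))).card = 1

/-- `S` and `T` lie in the same connected component of `R_k(G)`. -/
def SameComp {α : Type*} [DecidableEq α] (G : SimpleGraph α) (k : ℕ) (S T : Finset α) : Prop :=
  ∃ t Q, ReconfSeq G k S T t Q

/-- `distR G k S T` : the length of a shortest reconfiguration sequence from
`S` to `T` in `R_k(G)` (`⊤` if none exists). -/
noncomputable def distR {α : Type*} [DecidableEq α] (G : SimpleGraph α) (k : ℕ)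
    (S T : Finset α) : ℕ∞ :=
  sInf {m : ℕ∞ | ∃ t : ℕ, (t : ℕ∞) = m ∧ ∃ Q : ℕ → Finset α, ReconfSeq G k S T t Q}



set_option linter.unusedSectionVars false
set_option maxHeartbeats 1600000

section Generic
variable {α : Type*} [DecidableEq α] {G : SimpleGraph α} {k : ℕ} {S M T : Finset α}

lemma IsVC.mono {A B : Finset α} (h : IsVC G A) (hAB : A ⊆ B) : IsVC G B :=
  fun _ _ huv => (h huv).imp (fun h => hAB h) (fun h => hAB h)

lemma reconf_rev {t : ℕ} {Q : ℕ → Finset α} (h : ReconfSeq G k S T t Q) :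
    ReconfSeq G k T S t (fun i => Q (t - i)) := by
  obtain ⟨h0, ht, hvc, hstep⟩ := h
  refine ⟨by simpa using ht, by simpa using h0, fun i hi => hvc _ (by omega), fun i hi => ?_⟩
  show (symmDiff (Q (t - i)) (Q (t - (i + 1)))).card = 1
  have e1 : t - i = (t - (i + 1)) + 1 := by omega
  rw [e1, symmDiff_comm]
  exact hstep _ (by omega)

lemma reconf_trans {t1 t2 : ℕ} {Q1 Q2 : ℕ → Finset α}
    (h1 : ReconfSeq G k S M t1 Q1) (h2 : ReconfSeq G k M T t2 Q2) :
    ReconfSeq G k S T (t1 + t2) (fun i => if i < t1 then Q1 i else Q2 (i - t1)) := by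
  obtain ⟨h10, h1t, h1vc, h1s⟩ := h1
  obtain ⟨h20, h2t, h2vc, h2s⟩ := h2
  refine ⟨?_, ?_, fun i hi => ?_, fun i hi => ?_⟩
  · show (if 0 < t1 then Q1 0 else Q2 (0 - t1)) = S
    split_ifs with h
    · exact h10
    · have ht0 : t1 = 0 := by omega
      rw [show (0:ℕ) - t1 = 0 by omega, h20, ← h1t, ht0, h10]
  · show (if t1 + t2 < t1 then Q1 (t1 + t2) else Q2 (t1 + t2 - t1)) = T
    rw [if_neg (by omega), show t1 + t2 - t1 = t2 by omega, h2t]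
  · show IsVC G (if i < t1 then Q1 i else Q2 (i - t1)) ∧
      (if i < t1 then Q1 i else Q2 (i - t1)).card ≤ k
    split_ifs with h
    · exact h1vc _ (by omega)
    · exact h2vc _ (by omega)
  · show (symmDiff (if i < t1 then Q1 i else Q2 (i - t1))
      (if i + 1 < t1 then Q1 (i + 1) else Q2 (i + 1 - t1))).card = 1
    rcases lt_trichotomy (i + 1) t1 with h | h | h
    · rw [if_pos (by omega), if_pos h]
      exact h1s _ (by omega)
    · rw [if_pos (by omega), if_neg (by omega), show i + 1 - t1 = 0 by omega, h20, ← h1t, ← h]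
      exact h1s _ (by omega)
    · rw [if_neg (by omega), if_neg (by omega), show i + 1 - t1 = (i - t1) + 1 by omega]
      exact h2s _ (by omega)

lemma mono_path (μ : ℕ) :
    ∀ m (A B : Finset α), A ⊆ B → (B \ A).card = m → IsVC G A → B.card ≤ μ →
      ∃ Q, ReconfSeq G μ A B m Q := by
  intro m
  induction m with
  | zero =>
    intro A B hAB hcard hvc hB
    have hBA : B = A :=
      Finset.Subset.antisymm (Finset.sdiff_eq_empty_iff_subset.mp (Finset.card_eq_zero.mp hcard))
        hAB
    exact ⟨fun _ => A, rfl, hBA.symm, fun i _ => ⟨hvc, hBA ▸ hB⟩, fun i hi => by omega⟩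
  | succ m ih =>
    intro A B hAB hcard hvc hB
    have hne : (B \ A).Nonempty := Finset.card_pos.mp (by omega)
    obtain ⟨x, hx⟩ := hne
    have hxB : x ∈ B := (Finset.mem_sdiff.mp hx).1
    have hxA : x ∉ A := (Finset.mem_sdiff.mp hx).2
    have hsub : insert x A ⊆ B := Finset.insert_subset hxB hAB
    have hcard' : (B \ insert x A).card = m := by
      have he : B \ insert x A = (B \ A).erase x := by
        ext y; simp [Finset.mem_sdiff, Finset.mem_erase]; tauto
      rw [he, Finset.card_erase_of_mem hx, hcard]
      omega
    obtain ⟨Q', hQ'⟩ := ih (insert x A) B hsub hcard' (hvc.mono (Finset.subset_insert _ _)) hB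
    obtain ⟨h0, ht, hvcs, hs⟩ := hQ'
    refine ⟨fun i => if i = 0 then A else Q' (i - 1), by simp, ?_, fun i hi => ?_, fun i hi => ?_⟩
    · show (if m + 1 = 0 then A else Q' (m + 1 - 1)) = B
      rw [if_neg (by omega), show m + 1 - 1 = m by omega, ht]
    · show IsVC G (if i = 0 then A else Q' (i - 1)) ∧ (if i = 0 then A else Q' (i - 1)).card ≤ μ
      split_ifs with h
      · exact ⟨hvc, le_trans (Finset.card_le_card hAB) hB⟩
      · exact hvcs _ (by omega)
    · show (symmDiff (if i = 0 then A else Q' (i - 1))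
        (if i + 1 = 0 then A else Q' (i + 1 - 1))).card = 1
      rcases Nat.eq_zero_or_pos i with h | h
      · subst h
        rw [if_pos rfl, if_neg (show ¬ (0 + 1 = 0) by omega), show 0 + 1 - 1 = 0 by rfl, h0]
        have hins : symmDiff A (insert x A) = {x} := by
          rw [symmDiff_of_le (Finset.subset_insert x A)]
          ext y
          simp only [Finset.mem_sdiff, Finset.mem_insert, Finset.mem_singleton]
          constructor
          · rintro ⟨h1 | h1, h2⟩
            · exact h1
            · exact absurd h1 h2
          · rintro rfl
            exact ⟨Or.inl rfl, hxA⟩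
        rw [hins, Finset.card_singleton]
      · rw [if_neg (show ¬ (i = 0) by omega), if_neg (show ¬ (i + 1 = 0) by omega),
          show i + 1 - 1 = (i - 1) + 1 by omega]
        exact hs _ (by omega)

lemma lazy_to_strict :
    ∀ s (P : ℕ → Finset α), (∀ i ≤ s, IsVC G (P i) ∧ (P i).card ≤ k) →
      (∀ i < s, (symmDiff (P i) (P (i + 1))).card ≤ 1) →
      ∃ t ≤ s, ∃ Q, ReconfSeq G k (P 0) (P s) t Q := by
  intro s
  induction s with
  | zero =>
    intro P hvc _
    exact ⟨0, le_refl _, P, rfl, rfl, fun i hi => hvc i hi, fun i hi => by omega⟩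
  | succ s ih =>
    intro P hvc hstep
    obtain ⟨t, hts, Q', hQ'⟩ := ih (fun i => P (i + 1)) (fun i hi => hvc _ (by omega))
      (fun i hi => hstep _ (by omega))
    rcases Nat.lt_or_ge (symmDiff (P 0) (P 1)).card 1 with h | h
    · have h2 : symmDiff (P 0) (P 1) = ⊥ := by
        have := Finset.card_eq_zero.mp (by omega : (symmDiff (P 0) (P 1)).card = 0)
        simpa using this
      have h01 : P 0 = P 1 := symmDiff_eq_bot.mp h2
      exact ⟨t, by omega, Q', by rw [h01]; exact hQ'⟩
    · have h1 : (symmDiff (P 0) (P 1)).card = 1 := le_antisymm (hstep 0 (by omega)) h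
      obtain ⟨h0, ht, hvcs, hs⟩ := hQ'
      refine ⟨t + 1, by omega, fun i => if i = 0 then P 0 else Q' (i - 1), by simp, ?_,
        fun i hi => ?_, fun i hi => ?_⟩
      · show (if t + 1 = 0 then P 0 else Q' (t + 1 - 1)) = P (s + 1)
        rw [if_neg (show ¬ (t + 1 = 0) by omega), show t + 1 - 1 = t by omega, ht]
      · show IsVC G (if i = 0 then P 0 else Q' (i - 1)) ∧
          (if i = 0 then P 0 else Q' (i - 1)).card ≤ k
        split_ifs with h'
        · exact hvc 0 (by omega)
        · exact hvcs _ (by omega)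
      · show (symmDiff (if i = 0 then P 0 else Q' (i - 1))
          (if i + 1 = 0 then P 0 else Q' (i + 1 - 1))).card = 1
        rcases Nat.eq_zero_or_pos i with h' | h'
        · subst h'
          rw [if_pos rfl, if_neg (show ¬ (0 + 1 = 0) by omega), show 0 + 1 - 1 = 0 by rfl, h0]
          exact h1
        · rw [if_neg (show ¬ (i = 0) by omega), if_neg (show ¬ (i + 1 = 0) by omega),
            show i + 1 - 1 = (i - 1) + 1 by omega]
          exact hs _ (by omega)

lemma distR_le {t : ℕ} {Q : ℕ → Finset α} (h : ReconfSeq G k S T t Q) :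
    distR G k S T ≤ (t : ℕ∞) :=
  sInf_le ⟨t, rfl, Q, h⟩

lemma le_distR {c : ℕ∞} (h : ∀ t (Q : ℕ → Finset α), ReconfSeq G k S T t Q → c ≤ (t : ℕ∞)) :
    c ≤ distR G k S T := by
  refine le_sInf ?_
  rintro m ⟨t, rfl, Q, hQ⟩
  exact h t Q hQ

lemma distR_nonempty (h : distR G k S T ≠ ⊤) : ∃ t Q, ReconfSeq G k S T t Q := by
  by_contra hc
  push_neg at hc
  apply h
  rw [distR, sInf_eq_top]
  rintro m ⟨t, rfl, Q, hQ⟩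
  exact absurd hQ (hc t Q)

lemma distR_attain (h : distR G k S T ≠ ⊤) :
    ∃ t Q, ReconfSeq G k S T t Q ∧ (t : ℕ∞) ≤ distR G k S T := by
  obtain ⟨t1, Q1, h1⟩ := distR_nonempty h
  have hs : {t : ℕ | ∃ Q, ReconfSeq G k S T t Q}.Nonempty := ⟨t1, Q1, h1⟩
  obtain ⟨Q, hQ⟩ := Nat.sInf_mem hs
  exact ⟨_, Q, hQ, le_distR fun t' Q' h' => Nat.cast_le.mpr (Nat.sInf_le ⟨Q', h'⟩)⟩

end Generic

section Perturb
variable {V : Type} [Fintype V] [DecidableEq V] {G : SimpleGraph V} {n k : ℕ} {Sstar : Finset V}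

lemma mem_fcopy {v : V} {p : PV V n Sstar} : p ∈ fcopy n Sstar v ↔ p.1.1 = v := by
  simp [fcopy]

lemma mem_fset {X : Finset V} {p : PV V n Sstar} : p ∈ fset n Sstar X ↔ p.1.1 ∈ X := by
  simp [fset]

lemma mem_finv {Xh : Finset (PV V n Sstar)} {v : V} :
    v ∈ finv n Sstar Xh ↔ fcopy n Sstar v ⊆ Xh := by simp [finv]

lemma fcopy_card_le (v : V) : (fcopy n Sstar v).card ≤ 2 * n + 1 := by
  have h := Finset.card_le_card_of_injOn (fun p : PV V n Sstar => p.1.2)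
    (fun p _ => Finset.mem_univ _) (s := fcopy n Sstar v) (t := Finset.univ) ?_
  · simpa using h
  · intro p hp q hq hpq
    have hp1 : p.1.1 = v := mem_fcopy.mp hp
    have hq1 : q.1.1 = v := mem_fcopy.mp hq
    apply Subtype.ext
    apply Prod.ext
    · rw [hp1, hq1]
    · exact hpq

lemma fcopy_card_ge (v : V) : 2 * n ≤ (fcopy n Sstar v).card := by
  have h := Finset.card_le_card_of_injOn
    (fun i : Fin (2 * n) =>
      (⟨(v, i.castLE (by omega)), fun _ => by simpa using i.2⟩ : PV V n Sstar))
    (fun i _ => mem_fcopy.mpr rfl) (s := Finset.univ) ?_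
  · simpa using h
  · intro i _ j _ hij
    have hval : (i : ℕ) = (j : ℕ) := congrArg (fun p : PV V n Sstar => (p.1.2 : ℕ)) hij
    exact Fin.ext hval

lemma fset_eq_biUnion {X : Finset V} :
    fset n Sstar X = X.biUnion (fcopy n Sstar) := by
  ext p
  simp [fset, fcopy]

lemma fset_card_le {X : Finset V} : (fset n Sstar X).card ≤ (2 * n + 1) * X.card := by
  rw [fset_eq_biUnion]
  refine le_trans Finset.card_biUnion_le ?_
  refine le_trans (Finset.sum_le_sum (fun v _ => fcopy_card_le (n := n) (Sstar := Sstar) v)) ?_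
  rw [Finset.sum_const, smul_eq_mul, mul_comm]

lemma fset_card_ge {X : Finset V} : 2 * n * X.card ≤ (fset n Sstar X).card := by
  rw [fset_eq_biUnion, Finset.card_biUnion]
  · refine le_trans ?_ (Finset.sum_le_sum (fun v _ => fcopy_card_ge (n := n) (Sstar := Sstar) v))
    rw [Finset.sum_const, smul_eq_mul, mul_comm]
  · intro x _ y _ hxy
    rw [Function.onFun, Finset.disjoint_left]
    intro p hp hq
    exact hxy ((mem_fcopy.mp hp).symm.trans (mem_fcopy.mp hq))

lemma isVC_fset {X : Finset V} (h : IsVC G X) : IsVC (perturb G n Sstar) (fset n Sstar X) := by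
  intro p q hpq
  rcases h hpq with h' | h'
  · exact Or.inl (mem_fset.mpr h')
  · exact Or.inr (mem_fset.mpr h')

lemma isVC_finv {Xh : Finset (PV V n Sstar)} (h : IsVC (perturb G n Sstar) Xh) :
    IsVC G (finv n Sstar Xh) := by
  intro u v huv
  by_contra hc
  push_neg at hc
  obtain ⟨hu, hv⟩ := hc
  rw [mem_finv] at hu hv
  obtain ⟨p, hp, hpX⟩ := Finset.not_subset.mp hu
  obtain ⟨q, hq, hqX⟩ := Finset.not_subset.mp hv
  have hadj : (perturb G n Sstar).Adj p q := by
    show G.Adj p.1.1 q.1.1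
    rw [mem_fcopy.mp hp, mem_fcopy.mp hq]
    exact huv
  rcases h hadj with h' | h'
  · exact hpX h'
  · exact hqX h'

lemma finv_fset (hn1 : 1 ≤ n) {X : Finset V} : finv n Sstar (fset n Sstar X) = X := by
  ext v
  rw [mem_finv]
  constructor
  · intro hsub
    have hne : (fcopy n Sstar v).Nonempty := by
      refine Finset.card_pos.mp ?_
      have := fcopy_card_ge (n := n) (Sstar := Sstar) v
      omega
    obtain ⟨p, hp⟩ := hne
    have := mem_fset.mp (hsub hp)
    rwa [mem_fcopy.mp hp] at this
  · intro hv p hp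
    exact mem_fset.mpr (by rw [mem_fcopy.mp hp]; exact hv)

lemma fset_finv_subset {Xh : Finset (PV V n Sstar)} : fset n Sstar (finv n Sstar Xh) ⊆ Xh := by
  intro p hp
  exact (mem_finv.mp (mem_fset.mp hp)) (mem_fcopy.mpr rfl)

lemma finv_card_le (hn1 : 1 ≤ n) {Xh : Finset (PV V n Sstar)}
    (h : Xh.card ≤ 2 * n * k + 2 * n - 1) : (finv n Sstar Xh).card ≤ k := by
  have h1 : 2 * n * (finv n Sstar Xh).card ≤ Xh.card :=
    le_trans fset_card_ge (Finset.card_le_card fset_finv_subset)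
  by_contra hc
  push_neg at hc
  have h2 : 2 * n * (k + 1) ≤ 2 * n * (finv n Sstar Xh).card :=
    Nat.mul_le_mul_left _ (by omega)
  have h3 : 2 * n * (k + 1) = 2 * n * k + 2 * n := by ring
  have h4 : 2 * n * k + 2 * n ≤ 2 * n * k + 2 * n - 1 := by
    rw [← h3]
    exact le_trans h2 (le_trans h1 h)
  have hpos : 0 < 2 * n * k + 2 * n :=
    Nat.lt_of_lt_of_le (by omega : 0 < 2 * n) (Nat.le_add_left _ _)
  exact absurd h4 (not_le.mpr (Nat.sub_lt hpos one_pos))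

lemma fset_card_le_mu (hn : Fintype.card V = n) (hn1 : 1 ≤ n) {X : Finset V}
    (hXk : X.card ≤ k) : (fset n Sstar X).card ≤ 2 * n * k + 2 * n - 1 := by
  have hXn : X.card ≤ n := by
    have := Finset.card_le_univ X
    rwa [hn] at this
  have h3 : 2 * n * X.card ≤ 2 * n * k := Nat.mul_le_mul_left _ hXk
  calc (fset n Sstar X).card ≤ (2 * n + 1) * X.card := fset_card_le
    _ = 2 * n * X.card + X.card := by ring
    _ ≤ 2 * n * k + n := add_le_add h3 hXn
    _ ≤ 2 * n * k + 2 * n - 1 := by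
        rw [Nat.add_sub_assoc (by omega : 1 ≤ 2 * n)]
        exact Nat.add_le_add_left (by omega : n ≤ 2 * n - 1) _

lemma symmDiff_singleton_cases {α : Type*} [DecidableEq α] {X Y : Finset α} {a : α}
    (h : symmDiff X Y = {a}) :
    (Y ⊆ X ∧ X ⊆ insert a Y) ∨ (X ⊆ Y ∧ Y ⊆ insert a X) := by
  have key : ∀ z : α, (z ∈ X ∧ z ∉ Y ∨ z ∈ Y ∧ z ∉ X) ↔ z = a := by
    intro z
    rw [← Finset.mem_symmDiff, h, Finset.mem_singleton]
  by_cases ha : a ∈ X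
  · left
    constructor
    · intro y hy
      by_contra hyX
      have hya : y = a := (key y).mp (Or.inr ⟨hy, hyX⟩)
      exact hyX (hya ▸ ha)
    · intro x hx
      by_cases hxY : x ∈ Y
      · exact Finset.mem_insert_of_mem hxY
      · exact Finset.mem_insert.mpr (Or.inl ((key x).mp (Or.inl ⟨hx, hxY⟩)))
  · right
    constructor
    · intro x hx
      by_contra hxY
      have hxa : x = a := (key x).mp (Or.inl ⟨hx, hxY⟩)
      exact ha (hxa ▸ hx)
    · intro y hy
      by_cases hyX : y ∈ X
      · exact Finset.mem_insert_of_mem hyX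
      · exact Finset.mem_insert.mpr (Or.inl ((key y).mp (Or.inr ⟨hy, hyX⟩)))

lemma finv_step {Xh Yh : Finset (PV V n Sstar)} (h : (symmDiff Xh Yh).card = 1) :
    (symmDiff (finv n Sstar Xh) (finv n Sstar Yh)).card ≤ 1 := by
  obtain ⟨p, hp⟩ := Finset.card_eq_one.mp h
  have sub : ∀ (Ah Bh : Finset (PV V n Sstar)), Bh ⊆ Ah → Ah ⊆ insert p Bh →
      symmDiff (finv n Sstar Ah) (finv n Sstar Bh) ⊆ {p.1.1} := by
    intro Ah Bh hBA hAiB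
    have hmono : finv n Sstar Bh ⊆ finv n Sstar Ah := fun v hv =>
      mem_finv.mpr (fun q hq => hBA (mem_finv.mp hv hq))
    intro v hv
    rw [Finset.mem_symmDiff] at hv
    rcases hv with ⟨h1, h2⟩ | ⟨h1, h2⟩
    · obtain ⟨q, hq, hqB⟩ := Finset.not_subset.mp (fun hs => h2 (mem_finv.mpr hs))
      have hqA : q ∈ Ah := mem_finv.mp h1 hq
      have hqp : q = p := by
        rcases Finset.mem_insert.mp (hAiB hqA) with h' | h'
        · exact h'
        · exact absurd h' hqB
      rw [Finset.mem_singleton, ← mem_fcopy.mp hq, hqp]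
    · exact absurd (hmono h1) h2
  rcases symmDiff_singleton_cases hp with ⟨h1, h2⟩ | ⟨h1, h2⟩
  · exact le_trans (Finset.card_le_card (sub _ _ h1 h2)) (by simp)
  · rw [symmDiff_comm]
    exact le_trans (Finset.card_le_card (sub _ _ h1 h2)) (by simp)

end Perturb

section Main
variable {V : Type} [Fintype V] [DecidableEq V] {G : SimpleGraph V} {n k : ℕ} {Sstar : Finset V}

lemma step_expand (hn : Fintype.card V = n) (hn1 : 1 ≤ n) {X Y : Finset V}
    (hX : IsVC G X) (hY : IsVC G Y) (hXk : X.card ≤ k) (hYk : Y.card ≤ k)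
    (h : (symmDiff X Y).card = 1) :
    ∃ d ≤ 2 * n + 1, ∃ Qh, ReconfSeq (perturb G n Sstar) (2 * n * k + 2 * n - 1)
      (fset n Sstar X) (fset n Sstar Y) d Qh := by
  obtain ⟨a, ha⟩ := Finset.card_eq_one.mp h
  have key : ∀ (A B : Finset V), IsVC G A → B.card ≤ k → A ⊆ B → B ⊆ insert a A →
      ∃ d ≤ 2 * n + 1, ∃ Qh, ReconfSeq (perturb G n Sstar) (2 * n * k + 2 * n - 1)
        (fset n Sstar A) (fset n Sstar B) d Qh := by
    intro A B hAvc hBk hAB hBiA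
    have hfAB : fset n Sstar A ⊆ fset n Sstar B := fun p hp =>
      mem_fset.mpr (hAB (mem_fset.mp hp))
    have hdiff : fset n Sstar B \ fset n Sstar A ⊆ fcopy n Sstar a := by
      intro p hp
      rw [Finset.mem_sdiff, mem_fset, mem_fset] at hp
      rcases Finset.mem_insert.mp (hBiA hp.1) with h' | h'
      · exact mem_fcopy.mpr h'
      · exact absurd h' hp.2
    obtain ⟨Qh, hQh⟩ := mono_path (2 * n * k + 2 * n - 1) _ (fset n Sstar A) (fset n Sstar B)
      hfAB rfl (isVC_fset hAvc) (fset_card_le_mu hn hn1 hBk)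
    exact ⟨_, le_trans (Finset.card_le_card hdiff) (fcopy_card_le a), Qh, hQh⟩
  rcases symmDiff_singleton_cases ha with ⟨h1, h2⟩ | ⟨h1, h2⟩
  · obtain ⟨d, hd, Qh, hQh⟩ := key Y X hY hXk h1 h2
    exact ⟨d, hd, _, reconf_rev hQh⟩
  · exact key X Y hX hYk h1 h2

lemma expand (hn : Fintype.card V = n) (hn1 : 1 ≤ n) :
    ∀ t (S T : Finset V) (Q : ℕ → Finset V), ReconfSeq G k S T t Q →
      ∃ s ≤ (2 * n + 1) * t, ∃ Qh, ReconfSeq (perturb G n Sstar) (2 * n * k + 2 * n - 1)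
        (fset n Sstar S) (fset n Sstar T) s Qh := by
  intro t
  induction t with
  | zero =>
    intro S T Q hQ
    obtain ⟨h0, ht, hvc, _⟩ := hQ
    have hST : S = T := by rw [← h0, ← ht]
    refine ⟨0, by omega, fun _ => fset n Sstar S, rfl, by rw [hST], fun i _ => ?_,
      fun i hi => by omega⟩
    exact ⟨isVC_fset (h0 ▸ (hvc 0 le_rfl).1), fset_card_le_mu hn hn1 (h0 ▸ (hvc 0 le_rfl).2)⟩
  | succ t ih =>
    intro S T Q hQ
    obtain ⟨h0, ht, hvc, hs⟩ := hQ
    obtain ⟨s1, hs1, Qh1, hQh1⟩ := ih S (Q t) Q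
      ⟨h0, rfl, fun i hi => hvc i (by omega), fun i hi => hs i (by omega)⟩
    obtain ⟨d, hd, Qh2, hQh2⟩ := step_expand (Sstar := Sstar) hn hn1
      (hvc t (by omega)).1 (ht ▸ (hvc (t + 1) le_rfl).1)
      (hvc t (by omega)).2 (ht ▸ (hvc (t + 1) le_rfl).2)
      (ht ▸ hs t (by omega))
    refine ⟨s1 + d, ?_, _, reconf_trans hQh1 hQh2⟩
    calc s1 + d ≤ (2 * n + 1) * t + (2 * n + 1) := add_le_add hs1 hd
      _ = (2 * n + 1) * (t + 1) := by ring

lemma compress (hn1 : 1 ≤ n) {S T : Finset V} {s : ℕ} {Qh : ℕ → Finset (PV V n Sstar)}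
    (h : ReconfSeq (perturb G n Sstar) (2 * n * k + 2 * n - 1)
      (fset n Sstar S) (fset n Sstar T) s Qh) :
    ∃ t ≤ s, ∃ Q, ReconfSeq G k S T t Q := by
  obtain ⟨h0, hts, hvc, hstep⟩ := h
  obtain ⟨t, ht, Q, hQ⟩ := lazy_to_strict s (fun i => finv n Sstar (Qh i))
    (fun i hi => ⟨isVC_finv (hvc i hi).1, finv_card_le hn1 (hvc i hi).2⟩)
    (fun i hi => finv_step (hstep i hi))
  refine ⟨t, ht, Q, ?_⟩
  have e0 : finv n Sstar (Qh 0) = S := by rw [h0, finv_fset hn1]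
  have es : finv n Sstar (Qh s) = T := by rw [hts, finv_fset hn1]
  rwa [e0, es] at hQ

end Main


/-- With `H` the perturbation of the `n`-vertex bipartite
graph `G` w.r.t. a vertex cover `S*`, and `μ = 2nk + 2n − 1`: for all vertex
covers `S`, `T` of `G` of size at most `k`, if `dist_{R_k(G)}(S,T)` is finite
then `dist_{R_μ(H)}(f(S), f(T))` is finite and
`dist_{R_k(G)}(S,T) ≤ dist_{R_μ(H)}(f(S), f(T)) ≤ (2n+1)·dist_{R_k(G)}(S,T)`. -/
theorem stmt6 {V : Type} [Fintype V] [DecidableEq V] (G : SimpleGraph V)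
    (hbip : G.Colorable 2) (n : ℕ) (hn : Fintype.card V = n)
    (Sstar : Finset V) (hSstar : IsVC G Sstar) (k : ℕ) (hk : 0 < k)
    (S T : Finset V) (hS : IsVC G S) (hT : IsVC G T)
    (hSk : S.card ≤ k) (hTk : T.card ≤ k)
    (hfin : distR G k S T ≠ ⊤) :
    distR (perturb G n Sstar) (2 * n * k + 2 * n - 1) (fset n Sstar S) (fset n Sstar T) ≠ ⊤ ∧
    distR G k S T ≤
      distR (perturb G n Sstar) (2 * n * k + 2 * n - 1) (fset n Sstar S) (fset n Sstar T) ∧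
    distR (perturb G n Sstar) (2 * n * k + 2 * n - 1) (fset n Sstar S) (fset n Sstar T) ≤
      ((2 * n + 1 : ℕ) : ℕ∞) * distR G k S T := by
  by_cases hn0 : n = 0
  · subst hn0
    haveI hVempty : IsEmpty V := Fintype.card_eq_zero_iff.mp hn
    have hSe : S = T := by
      have h1 : S = ∅ := Finset.eq_empty_of_forall_notMem (fun x _ => (IsEmpty.false x).elim)
      have h2 : T = ∅ := Finset.eq_empty_of_forall_notMem (fun x _ => (IsEmpty.false x).elim)
      rw [h1, h2]
    have hG0 : distR G k S T ≤ (0 : ℕ) :=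
      distR_le (t := 0) (Q := fun _ => S)
        ⟨rfl, hSe.symm ▸ rfl, fun i _ => ⟨hS, hSk⟩, fun i hi => by omega⟩
    have hfe : fset 0 Sstar S = ∅ :=
      Finset.eq_empty_of_forall_notMem (fun p _ => (IsEmpty.false p.1.1).elim)
    have hfe' : fset 0 Sstar T = ∅ :=
      Finset.eq_empty_of_forall_notMem (fun p _ => (IsEmpty.false p.1.1).elim)
    have hH0 : distR (perturb G 0 Sstar) (2 * 0 * k + 2 * 0 - 1)
        (fset 0 Sstar S) (fset 0 Sstar T) ≤ (0 : ℕ) := by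
      refine distR_le (t := 0) (Q := fun _ => fset 0 Sstar S)
        ⟨rfl, by rw [hfe, hfe'], fun i _ => ?_, fun i hi => by omega⟩
      refine ⟨fun p q hpq => (IsEmpty.false p.1.1).elim, ?_⟩
      rw [hfe]
      simp
    have hHeq : distR (perturb G 0 Sstar) (2 * 0 * k + 2 * 0 - 1)
        (fset 0 Sstar S) (fset 0 Sstar T) = 0 := le_antisymm (by exact_mod_cast hH0) zero_le
    have hGeq : distR G k S T = 0 := le_antisymm (by exact_mod_cast hG0) zero_le
    refine ⟨by rw [hHeq]; exact (by simp), by rw [hHeq, hGeq], ?_⟩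
    rw [hHeq]
    exact zero_le
  · have hn1 : 1 ≤ n := by omega
    obtain ⟨t0, Q0, h0, hle⟩ := distR_attain hfin
    obtain ⟨s0, hs0, Qh0, hQh0⟩ := expand (Sstar := Sstar) hn hn1 t0 S T Q0 h0
    have hg3 : distR (perturb G n Sstar) (2 * n * k + 2 * n - 1) (fset n Sstar S)
        (fset n Sstar T) ≤ (((2 * n + 1) * t0 : ℕ) : ℕ∞) :=
      le_trans (distR_le hQh0) (Nat.cast_le.mpr hs0)
    refine ⟨ne_top_of_le_ne_top (ENat.coe_ne_top _) hg3, ?_, ?_⟩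
    · refine le_sInf ?_
      rintro m ⟨s, rfl, Qh, hQh⟩
      obtain ⟨t, hts, Q, hQ⟩ := compress hn1 hQh
      exact le_trans (distR_le hQ) (Nat.cast_le.mpr hts)
    · refine le_trans hg3 ?_
      rw [Nat.cast_mul]
      exact mul_le_mul_right hle _
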